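/- For every finite family (ξ_j)_{j∈J} of complex numbers, every real δ with 0 < δ < π/2, and every N ∈ ℕ, there exists an integer n ≥ N such that for every j ∈ J one has Re(ξ_j^n) ≥ cos(δ)·|ξ_j|^n. -/

import Mathlib

open Filter Real Complex

instance : Fact ((0:ℝ) < 2 * Real.pi) := ⟨by positivity⟩

instance : CompactSpace Real.Angle :=
  inferInstanceAs (CompactSpace (AddCircle (2 * Real.pi)))

/-- On `Real.Angle`, a small norm forces a small `toReal`. -/
lemma angle_abs_toReal_le_of_norm_lt {θ : Real.Angle} {δ : ℝ} (hδ : δ < Real.pi / 2)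
    (h : ‖θ‖ < δ) : |θ.toReal| ≤ δ := by
  have hπ := Real.pi_pos
  have ht : θ = ((θ.toReal : ℝ) : Real.Angle) := (θ.coe_toReal).symm
  set t := θ.toReal with htdef
  have htle : |t| ≤ Real.pi := θ.abs_toReal_le_pi
  have h' : ‖((t : ℝ) : AddCircle (2 * Real.pi))‖ < δ := by rw [ht] at h; exact h
  rw [AddCircle.norm_eq] at h'
  set k : ℤ := round ((2 * Real.pi)⁻¹ * t) with hk
  by_cases hk0 : k = 0
  · rw [hk0] at h'
    simp at h'
    linarith [h'.le]
  · exfalso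
    have hk1 : (1 : ℝ) ≤ |(k : ℝ)| := by
      have : (1 : ℤ) ≤ |k| := Int.one_le_abs (by simpa using hk0)
      calc (1:ℝ) = ((1:ℤ):ℝ) := by norm_num
        _ ≤ ((|k|:ℤ):ℝ) := by exact_mod_cast this
        _ = |(k:ℝ)| := by push_cast; ring
    have h2 : 2 * Real.pi * |(k : ℝ)| - |t| ≤ |t - k * (2 * Real.pi)| := by
      have := abs_sub_abs_le_abs_sub (k * (2 * Real.pi)) t
      rw [abs_sub_comm] at this
      have habs : |(k : ℝ) * (2 * Real.pi)| = 2 * Real.pi * |(k:ℝ)| := by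
        rw [abs_mul, abs_of_pos (by linarith : (0:ℝ) < 2 * Real.pi)]; ring
      linarith [this, habs ▸ this]
    nlinarith [h', h2, htle, hk1, hπ]

/-- Simultaneous argument recurrence: for a finite family of complex numbers `ξ j`,
`0 < δ < π/2` and `N`, there is `n ≥ N` with `Re (ξ j ^ n) ≥ cos δ * |ξ j| ^ n` for all `j`. -/
theorem simultaneous_argument_recurrence {J : Type*} [Fintype J] (ξ : J → ℂ)
    (δ : ℝ) (hδ0 : 0 < δ) (hδ : δ < Real.pi / 2) (N : ℕ) :
    ∃ n : ℕ, N ≤ n ∧ ∀ j : J, Real.cos δ * ‖ξ j‖ ^ n ≤ ((ξ j) ^ n).re := by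
  set θ : J → Real.Angle := fun j => ((ξ j).arg : Real.Angle) with hθ
  set u : ℕ → (J → Real.Angle) := fun n j => n • θ j with hu
  haveI : Fact ((0:ℝ) < 2 * Real.pi) := ⟨by positivity⟩
  -- compactness: get a cluster point of u
  obtain ⟨a, ha⟩ := exists_clusterPt_of_compactSpace (Filter.map u Filter.atTop)
  have hfreq : ∃ᶠ n in Filter.atTop, u n ∈ Metric.ball a (δ / 2) :=
    (mapClusterPt_iff_frequently.mp ha) _ (Metric.ball_mem_nhds a (by linarith))
  obtain ⟨m, -, hm⟩ := (Filter.frequently_atTop.mp hfreq) 0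
  obtain ⟨n, hn, hn'⟩ := (Filter.frequently_atTop.mp hfreq) (m + N)
  refine ⟨n - m, by omega, fun j => ?_⟩
  set k := n - m with hkdef
  have hnm : m ≤ n := by omega
  -- distance estimate
  have hdist : dist (u n) (u m) < δ := by
    calc dist (u n) (u m) ≤ dist (u n) a + dist a (u m) := dist_triangle _ _ _
      _ < δ / 2 + δ / 2 := by
          have h1 := Metric.mem_ball.mp hn'
          have h2 := Metric.mem_ball.mp hm
          rw [dist_comm a (u m)]
          exact add_lt_add h1 h2
      _ = δ := by ring
  have hdj : dist (u n j) (u m j) < δ := lt_of_le_of_lt (dist_le_pi_dist (u n) (u m) j) hdist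
  have hsub : u n j - u m j = k • θ j := by
    rw [hu]
    simp only []
    rw [hkdef, sub_nsmul _ hnm, sub_eq_add_neg]
  have hnorm : ‖k • θ j‖ < δ := by
    rw [← hsub, ← dist_eq_norm]; exact hdj
  have habs : |(k • θ j).toReal| ≤ δ := angle_abs_toReal_le_of_norm_lt hδ hnorm
  -- cos estimate
  have hcos : Real.cos δ ≤ Real.cos ((k : ℝ) * (ξ j).arg) := by
    have h1 : Real.cos ((k : ℝ) * (ξ j).arg) = Real.Angle.cos (k • θ j) := by
      rw [hθ]
      simp only []
      rw [← Real.Angle.coe_nsmul, Real.Angle.cos_coe, nsmul_eq_mul]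
    have h2 : Real.Angle.cos (k • θ j) = Real.cos (k • θ j).toReal :=
      (Real.Angle.cos_toReal _).symm
    rw [h1, h2, ← Real.cos_abs ((k • θ j).toReal)]
    exact Real.cos_le_cos_of_nonneg_of_le_pi (abs_nonneg _)
      (by linarith [Real.pi_pos]) habs
  -- compute the real part
  have hre : ((ξ j) ^ k).re = ‖ξ j‖ ^ k * Real.cos ((k : ℝ) * (ξ j).arg) := by
    conv_lhs => rw [← Complex.norm_mul_exp_arg_mul_I (ξ j)]
    rw [mul_pow, ← Complex.ofReal_pow, ← Complex.exp_nat_mul]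
    rw [show ((k : ℂ) * ((ξ j).arg * Complex.I)) = (((k : ℝ) * (ξ j).arg : ℝ) : ℂ) * Complex.I by
      push_cast; ring]
    rw [Complex.mul_re, Complex.ofReal_re, Complex.ofReal_im, Complex.exp_ofReal_mul_I_re]
    ring
  rw [hre]
  have : (0:ℝ) ≤ ‖ξ j‖ ^ k := pow_nonneg (norm_nonneg _) k
  nlinarith [this, hcos]
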